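/- Let G be a finite connected simple graph on n ≥ 2 vertices with adjacency matrix A_G, all degrees d_i > 0, normalized adjacency Â = D^{-1/2} A_G D^{-1/2}, and normalized Laplacian Δ = I − Â with eigenvalues 0 = λ₀ ≤ λ₁ ≤ … ≤ λ_{n−1}. Let W ∈ ℝ^{d×d} be symmetric with eigenvalues μ₀ ≤ μ₁ ≤ … ≤ μ_{d−1}, and suppose |μ₀| (λ_{n−1} − 1) > μ_{d−1}. Then for (Lebesgue) almost every initial condition F₀ ∈ ℝ^{n×d} with F₀ ≠ 0, the solution F : [0, ∞) → ℝ^{n×d} of the linear matrix ODE Ḟ(t) = Â F(t) W with F(0) = F₀ satisfies: F(t) ≠ 0 for all t, and the normalized Dirichlet energy trace(F(t)ᵀ Δ F(t)) / ‖F(t)‖_F² converges to λ_{n−1} as t → ∞ (i.e., the dynamics is High-Frequency-Dominant). -/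

import Mathlib

set_option maxHeartbeats 1000000
open Matrix MeasureTheory Filter
attribute [local instance] Matrix.normedAddCommGroup Matrix.normedSpace

lemma hfd_aux_trace_sq {a b : ℕ} (X : Matrix (Fin a) (Fin b) ℝ) :
    (Xᵀ * X).trace = ∑ i, ∑ j, X i j ^ 2 := by
  rw [Finset.sum_comm]
  simp only [Matrix.trace, Matrix.diag, Matrix.mul_apply, Matrix.transpose_apply]
  exact Finset.sum_congr rfl fun j _ => Finset.sum_congr rfl fun i _ => (pow_two _).symm

lemma hfd_aux_trace_diag {a b : ℕ} (lam : Fin a → ℝ) (X : Matrix (Fin a) (Fin b) ℝ) :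
    (Xᵀ * (Matrix.diagonal lam * X)).trace = ∑ i, ∑ j, lam i * X i j ^ 2 := by
  have e : (Xᵀ * (Matrix.diagonal lam * X)).trace = ∑ j, ∑ i, lam i * X i j ^ 2 := by
    simp only [Matrix.trace, Matrix.diag, Matrix.mul_apply, Matrix.transpose_apply,
      Matrix.diagonal_apply, ite_mul, zero_mul, Finset.sum_ite_eq, Finset.mem_univ, if_true]
    exact Finset.sum_congr rfl fun j _ => Finset.sum_congr rfl fun i _ => by ring
  rw [e, Finset.sum_comm]

lemma hfd_aux_of_eq_sum {a b : ℕ} (v : Fin a → Fin b → ℝ) :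
    (Matrix.of v : Matrix (Fin a) (Fin b) ℝ)
      = ∑ i, ∑ j, v i j • Matrix.single i j (1:ℝ) := by
  conv_lhs => rw [matrix_eq_sum_single (Matrix.of v)]
  refine Finset.sum_congr rfl fun i _ => Finset.sum_congr rfl fun j _ => ?_
  rw [Matrix.smul_single, smul_eq_mul, mul_one]
  rfl

lemma hfd_aux_hasDerivAt {a b : ℕ} (α c : Fin a → Fin b → ℝ) (t : ℝ) :
    HasDerivAt (fun s : ℝ => (Matrix.of (fun i j => Real.exp (α i j * s) * c i j) :
        Matrix (Fin a) (Fin b) ℝ))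
      (Matrix.of fun i j => Real.exp (α i j * t) * α i j * c i j) t := by
  have h : ∀ i j, HasDerivAt (fun s => Real.exp (α i j * s) * c i j)
      (Real.exp (α i j * t) * α i j * c i j) t := by
    intro i j
    have h1 : HasDerivAt (fun s : ℝ => α i j * s) (α i j) t := by
      simpa using (hasDerivAt_id t).const_mul (α i j)
    exact h1.exp.mul_const (c i j)
  have H : HasDerivAt
      (fun s : ℝ => ∑ i, ∑ j, (Real.exp (α i j * s) * c i j) • Matrix.single i j (1:ℝ))
      (∑ i, ∑ j, (Real.exp (α i j * t) * α i j * c i j) • Matrix.single i j (1:ℝ)) t :=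
    HasDerivAt.fun_sum fun i _ => HasDerivAt.fun_sum fun j _ => (h i j).smul_const _
  have e1 : (fun s : ℝ => (Matrix.of (fun i j => Real.exp (α i j * s) * c i j) :
      Matrix (Fin a) (Fin b) ℝ)) = fun s =>
      ∑ i, ∑ j, (Real.exp (α i j * s) * c i j) • Matrix.single i j (1:ℝ) :=
    funext fun s => hfd_aux_of_eq_sum _
  rw [e1, hfd_aux_of_eq_sum]
  exact H

lemma hfd_aux_lam_le_two {n : ℕ} (hn : 2 ≤ n)
    (G : SimpleGraph (Fin n)) [DecidableRel G.Adj]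
    (hdeg : ∀ i, 0 < G.degree i)
    (Ahat Δ : Matrix (Fin n) (Fin n) ℝ)
    (hAhat : Ahat =
      Matrix.diagonal (fun i => (Real.sqrt (G.degree i))⁻¹) * G.adjMatrix ℝ *
        Matrix.diagonal (fun i => (Real.sqrt (G.degree i))⁻¹))
    (hΔ : Δ = 1 - Ahat)
    (lam : Fin n → ℝ)
    (Q : Matrix (Fin n) (Fin n) ℝ) (hQ1 : Qᵀ * Q = 1)
    (hΔspec : Δ = Q * Matrix.diagonal lam * Qᵀ)
    (istar : Fin n) : lam istar ≤ 2 := by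
  classical
  set lstar := lam istar with hlstardef
  set A : Matrix (Fin n) (Fin n) ℝ := G.adjMatrix ℝ with hA
  set sd : Fin n → ℝ := fun i => (Real.sqrt (G.degree i))⁻¹ with hsd
  set q : Fin n → ℝ := fun k => Q k istar with hq
  set y : Fin n → ℝ := fun i => q i * sd i with hy
  have hsqrt_pos : ∀ i, 0 < Real.sqrt (G.degree i) := fun i =>
    Real.sqrt_pos.mpr (by exact_mod_cast hdeg i)
  have hqq : q ⬝ᵥ q = 1 := by
    have h := congrFun (congrFun hQ1 istar) istar
    simp only [Matrix.mul_apply, Matrix.transpose_apply, Matrix.one_apply_eq] at h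
    simpa [dotProduct, hq] using h
  have hQe : Qᵀ *ᵥ q = Pi.single istar 1 := by
    funext m
    have h := congrFun (congrFun hQ1 m) istar
    simp only [Matrix.mul_apply, Matrix.transpose_apply, Matrix.one_apply] at h
    simp only [Matrix.mulVec, dotProduct, Matrix.transpose_apply, hq]
    rw [h, Pi.single_apply]
  have hΔq : q ⬝ᵥ (Δ *ᵥ q) = lstar := by
    rw [hΔspec, ← Matrix.mulVec_mulVec, ← Matrix.mulVec_mulVec, hQe,
      Matrix.diagonal_mulVec_single, Matrix.mulVec_single]
    simp only [dotProduct, Pi.smul_apply, op_smul_eq_mul, Matrix.col_apply, mul_one]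
    have he : ∑ k, q k * (Q k istar * lam istar) = (∑ k, q k * q k) * lam istar := by
      rw [Finset.sum_mul]
      exact Finset.sum_congr rfl fun k _ => by rw [hq]; ring
    rw [he]
    have hqq' : ∑ k, q k * q k = 1 := hqq
    rw [hqq', one_mul]
  have hAe : ∀ i j, Ahat i j = sd i * A i j * sd j := by
    intro i j
    rw [hAhat, Matrix.mul_diagonal, Matrix.diagonal_mul]
  have hAq : q ⬝ᵥ (Ahat *ᵥ q) = ∑ i, ∑ j, A i j * (y i * y j) := by
    simp only [dotProduct, Matrix.mulVec, hAe, Finset.mul_sum]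
    exact Finset.sum_congr rfl fun i _ => Finset.sum_congr rfl fun j _ => by
      simp only [hy]; ring
  have hqq2 : q ⬝ᵥ q = ∑ i, (G.degree i : ℝ) * y i ^ 2 := by
    simp only [dotProduct]
    refine Finset.sum_congr rfl fun i _ => ?_
    have h1 : (Real.sqrt (G.degree i)) ^ 2 = (G.degree i : ℝ) :=
      Real.sq_sqrt (by positivity)
    have h2 : (Real.sqrt (G.degree i)) ≠ 0 := ne_of_gt (hsqrt_pos i)
    have h3 : ((Real.sqrt (G.degree i))⁻¹) ^ 2 = ((G.degree i : ℝ))⁻¹ := by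
      rw [inv_pow, h1]
    have hd0 : (G.degree i : ℝ) ≠ 0 := by
      have := hdeg i; positivity
    simp only [hy, hsd]
    rw [mul_pow, h3]
    field_simp
  have hrow : ∀ i, ∑ j, A i j = (G.degree i : ℝ) := by
    intro i
    simp [hA, SimpleGraph.adjMatrix_apply, Finset.sum_boole, SimpleGraph.degree,
      SimpleGraph.neighborFinset_eq_filter]
  have hAsymm : ∀ i j, A i j = A j i := by
    intro i j; simp [hA, SimpleGraph.adjMatrix_apply, G.adj_comm]
  have hAnn : ∀ i j, 0 ≤ A i j := by
    intro i j; simp only [hA, SimpleGraph.adjMatrix_apply]; split <;> norm_num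
  have key : 0 ≤ q ⬝ᵥ q + q ⬝ᵥ (Ahat *ᵥ q) := by
    have hnn : 0 ≤ ∑ i, ∑ j, A i j * (y i + y j) ^ 2 :=
      Finset.sum_nonneg fun i _ => Finset.sum_nonneg fun j _ =>
        mul_nonneg (hAnn i j) (sq_nonneg _)
    have h2 : ∑ i, ∑ j, A i j * y i ^ 2 = ∑ i, (G.degree i : ℝ) * y i ^ 2 := by
      refine Finset.sum_congr rfl fun i _ => ?_
      rw [← Finset.sum_mul, hrow]
    have h3 : ∑ i, ∑ j, A i j * y j ^ 2 = ∑ i, (G.degree i : ℝ) * y i ^ 2 := by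
      rw [Finset.sum_comm]
      refine Finset.sum_congr rfl fun j _ => ?_
      calc ∑ i, A i j * y j ^ 2 = (∑ i, A j i) * y j ^ 2 := by
            rw [Finset.sum_mul]
            exact Finset.sum_congr rfl fun i _ => by rw [hAsymm]
        _ = (G.degree j : ℝ) * y j ^ 2 := by rw [hrow]
    have hexp : ∑ i, ∑ j, A i j * (y i + y j) ^ 2
        = (∑ i, ∑ j, A i j * y i ^ 2) + (2 * (∑ i, ∑ j, A i j * (y i * y j))
          + ∑ i, ∑ j, A i j * y j ^ 2) := by
      simp only [Finset.mul_sum, ← Finset.sum_add_distrib]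
      exact Finset.sum_congr rfl fun i _ => Finset.sum_congr rfl fun j _ => by ring
    rw [hqq2, hAq]
    linarith [hnn, hexp, h2, h3]
  have hsub : q ⬝ᵥ (Δ *ᵥ q) = q ⬝ᵥ q - q ⬝ᵥ (Ahat *ᵥ q) := by
    rw [hΔ, Matrix.sub_mulVec, Matrix.one_mulVec, dotProduct_sub]
  rw [hsub, hqq] at hΔq
  rw [hqq] at key
  linarith


lemma hfd_aux_ode {n d : ℕ} (Ahat Q : Matrix (Fin n) (Fin n) ℝ) (W P : Matrix (Fin d) (Fin d) ℝ)
    (lam : Fin n → ℝ) (mu : Fin d → ℝ)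
    (hAQ : Ahat * Q = Q * Matrix.diagonal (fun i => 1 - lam i))
    (hPW : Pᵀ * W = Matrix.diagonal mu * Pᵀ)
    (c : Matrix (Fin n) (Fin d) ℝ) (α : Fin n → Fin d → ℝ)
    (hα : ∀ i j, α i j = (1 - lam i) * mu j) (t : ℝ) :
    HasDerivAt (fun s : ℝ => Q * Matrix.of (fun i j => Real.exp (α i j * s) * c i j) * Pᵀ)
      (Ahat * (Q * Matrix.of (fun i j => Real.exp (α i j * t) * c i j) * Pᵀ) * W) t := by
  have hg := hfd_aux_hasDerivAt α c t
  let Lm : Matrix (Fin n) (Fin d) ℝ →ₗ[ℝ] Matrix (Fin n) (Fin d) ℝ :=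
    { toFun := fun X => Q * X * Pᵀ
      map_add' := fun X Y => by show Q * (X + Y) * Pᵀ = Q * X * Pᵀ + Q * Y * Pᵀ; rw [Matrix.mul_add, Matrix.add_mul]
      map_smul' := fun r X => by
        simp only [RingHom.id_apply]; rw [Matrix.mul_smul, Matrix.smul_mul] }
  let L : Matrix (Fin n) (Fin d) ℝ →L[ℝ] Matrix (Fin n) (Fin d) ℝ :=
    LinearMap.toContinuousLinearMap Lm
  have h1 := (L.hasFDerivAt
    (x := Matrix.of (fun i j => Real.exp (α i j * t) * c i j))).comp_hasDerivAt t hg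
  have hfun : (fun s : ℝ => Q * Matrix.of (fun i j => Real.exp (α i j * s) * c i j) * Pᵀ)
      = L ∘ (fun s : ℝ => Matrix.of (fun i j => Real.exp (α i j * s) * c i j)) := rfl
  have hmid : Matrix.diagonal (fun i => 1 - lam i) *
      (Matrix.of (fun i j => Real.exp (α i j * t) * c i j) * Matrix.diagonal mu)
      = Matrix.of (fun i j => Real.exp (α i j * t) * α i j * c i j) := by
    ext i j
    simp only [Matrix.diagonal_mul, Matrix.mul_diagonal, Matrix.of_apply, hα]
    ring
  have hval : Ahat * (Q * Matrix.of (fun i j => Real.exp (α i j * t) * c i j) * Pᵀ) * W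
      = L (Matrix.of fun i j => Real.exp (α i j * t) * α i j * c i j) := by
    show _ = Q * Matrix.of (fun i j => Real.exp (α i j * t) * α i j * c i j) * Pᵀ
    calc Ahat * (Q * Matrix.of (fun i j => Real.exp (α i j * t) * c i j) * Pᵀ) * W
        = (Ahat * Q) * (Matrix.of (fun i j => Real.exp (α i j * t) * c i j) * (Pᵀ * W)) := by
          simp only [Matrix.mul_assoc]
      _ = (Q * Matrix.diagonal (fun i => 1 - lam i)) *
            (Matrix.of (fun i j => Real.exp (α i j * t) * c i j) * (Matrix.diagonal mu * Pᵀ)) := by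
          rw [hAQ, hPW]
      _ = Q * (Matrix.diagonal (fun i => 1 - lam i) *
            (Matrix.of (fun i j => Real.exp (α i j * t) * c i j) * Matrix.diagonal mu)) * Pᵀ := by
          simp only [Matrix.mul_assoc]
      _ = Q * Matrix.of (fun i j => Real.exp (α i j * t) * α i j * c i j) * Pᵀ := by
          rw [hmid]
  rw [hfun, hval]
  exact h1


/-- **High-Frequency-Dominant dynamics (Theorem 4.3 of Di Giovanni et al., HFD case).**
Let `G` be a connected finite simple graph on `n ≥ 2` vertices with positive degrees,
normalized adjacency `Â = D^{-1/2} A D^{-1/2}` and normalized Laplacian `Δ = I − Â`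
with ordered eigenvalues `0 = λ₀ ≤ … ≤ λ_{n−1}` (spectral decomposition `Δ = Q Λ Qᵀ`),
and let `W` be symmetric with ordered eigenvalues `μ₀ ≤ … ≤ μ_{d−1}`
(spectral decomposition `W = P M Pᵀ`). If `|μ₀| (λ_{n−1} − 1) > μ_{d−1}`, then for
Lebesgue-almost every nonzero initial condition `F₀`, any solution of `Ḟ = Â F W` on
`[0,∞)` with `F(0) = F₀` never vanishes and its normalized Dirichlet energy
`trace(Fᵀ Δ F)/‖F‖_F²` converges to `λ_{n−1}`: the dynamics is HFD. -/
theorem hfd_dynamics {n d : ℕ} (hn : 2 ≤ n) (hd : 0 < d)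
    (G : SimpleGraph (Fin n)) [DecidableRel G.Adj] (hG : G.Connected)
    (hdeg : ∀ i, 0 < G.degree i)
    (Ahat Δ : Matrix (Fin n) (Fin n) ℝ)
    (hAhat : Ahat =
      Matrix.diagonal (fun i => (Real.sqrt (G.degree i))⁻¹) * G.adjMatrix ℝ *
        Matrix.diagonal (fun i => (Real.sqrt (G.degree i))⁻¹))
    (hΔ : Δ = 1 - Ahat)
    (lam : Fin n → ℝ) (hlam_mono : Monotone lam) (hlam0 : lam ⟨0, by omega⟩ = 0)
    (Q : Matrix (Fin n) (Fin n) ℝ) (hQorth : Qᵀ * Q = 1 ∧ Q * Qᵀ = 1)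
    (hΔspec : Δ = Q * Matrix.diagonal lam * Qᵀ)
    (W : Matrix (Fin d) (Fin d) ℝ) (hW : W.IsSymm)
    (mu : Fin d → ℝ) (hmu_mono : Monotone mu)
    (P : Matrix (Fin d) (Fin d) ℝ) (hPorth : Pᵀ * P = 1 ∧ P * Pᵀ = 1)
    (hWspec : W = P * Matrix.diagonal mu * Pᵀ)
    (hcond : |mu ⟨0, hd⟩| * (lam ⟨n - 1, by omega⟩ - 1) > mu ⟨d - 1, by omega⟩) :
    ∀ᵐ f : Fin n → Fin d → ℝ,
      Matrix.of f ≠ 0 →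
      ∀ F : ℝ → Matrix (Fin n) (Fin d) ℝ,
        F 0 = Matrix.of f →
        (∀ t : ℝ, 0 ≤ t → HasDerivWithinAt F (Ahat * F t * W) (Set.Ici 0) t) →
        (∀ t : ℝ, 0 ≤ t → F t ≠ 0) ∧
        Tendsto
          (fun t : ℝ => ((F t)ᵀ * Δ * F t).trace / ∑ i : Fin n, ∑ j : Fin d, (F t i j) ^ 2)
          atTop (nhds (lam ⟨n - 1, by omega⟩)) := by
  classical
  obtain ⟨hQ1, hQ2⟩ := hQorth
  obtain ⟨hP1, hP2⟩ := hPorth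
  set i0 : Fin n := ⟨0, by omega⟩ with hi0def
  set istar : Fin n := ⟨n - 1, by omega⟩ with histardef
  set j0 : Fin d := ⟨0, hd⟩ with hj0def
  set jstar : Fin d := ⟨d - 1, by omega⟩ with hjstardef
  set lstar : ℝ := lam istar with hlstardef
  have hlam_le : ∀ i, lam i ≤ lstar := fun i =>
    hlam_mono (by rw [Fin.le_def]; simp [istar]; omega)
  have hlam_nonneg : ∀ i, 0 ≤ lam i := by
    intro i
    have h := hlam_mono (show i0 ≤ i by rw [Fin.le_def]; simp [i0])
    rwa [hlam0] at h
  have hmu_le : ∀ j, mu j ≤ mu jstar := fun j =>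
    hmu_mono (by rw [Fin.le_def]; simp [jstar]; omega)
  have hmu_ge : ∀ j, mu j0 ≤ mu j := fun j =>
    hmu_mono (by rw [Fin.le_def]; simp [j0])
  -- sandwich identity
  have hsand : ∀ (X : Matrix (Fin n) (Fin d) ℝ), Qᵀ * (Q * X * Pᵀ) * P = X := by
    intro X
    simp only [← Matrix.mul_assoc, hQ1, Matrix.one_mul]
    rw [Matrix.mul_assoc, hP1, Matrix.mul_one]
  -- trace facts
  have hAdiag : ∀ i, Ahat i i = 0 := by
    intro i
    rw [hAhat, Matrix.mul_diagonal, Matrix.diagonal_mul, SimpleGraph.adjMatrix_apply,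
      if_neg (G.irrefl), mul_zero, zero_mul]
  have hsumlam : ∑ i, lam i = (n : ℝ) := by
    have h1 : Δ.trace = (n : ℝ) := by
      have h2 : ∀ i, Δ i i = 1 := fun i => by
        rw [hΔ]; simp [Matrix.sub_apply, hAdiag]
      simp [Matrix.trace, Matrix.diag, h2]
    have h3 : Δ.trace = ∑ i, lam i := by
      rw [hΔspec, Matrix.trace_mul_cycle, hQ1, Matrix.one_mul, Matrix.trace_diagonal]
    rw [← h3, h1]
  have hlstar_gt1 : 1 < lstar := by
    by_contra hle
    push_neg at hle
    have hcard : (Finset.univ.erase i0).card = n - 1 := by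
      rw [Finset.card_erase_of_mem (Finset.mem_univ _), Finset.card_univ, Fintype.card_fin]
    have hsum' : ∑ i ∈ Finset.univ.erase i0, lam i = (n : ℝ) := by
      have h := Finset.add_sum_erase Finset.univ lam (Finset.mem_univ i0)
      rw [hlam0, zero_add] at h
      rw [h, hsumlam]
    have hbd : ∑ i ∈ Finset.univ.erase i0, lam i ≤ (Finset.univ.erase i0).card • (1:ℝ) :=
      Finset.sum_le_card_nsmul _ _ _ (fun i _ => le_trans (hlam_le i) hle)
    rw [hsum', hcard, nsmul_eq_mul, mul_one] at hbd
    have : (n : ℝ) ≤ ((n - 1 : ℕ) : ℝ) := hbd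
    rw [Nat.cast_le] at this
    omega
  have hlstar_le2 : lstar ≤ 2 :=
    hfd_aux_lam_le_two hn G hdeg Ahat Δ hAhat hΔ lam Q hQ1 hΔspec istar
  have hmu0_neg : mu j0 < 0 := by
    by_contra h
    push_neg at h
    rw [abs_of_nonneg h] at hcond
    have h1 : mu j0 ≤ mu jstar := hmu_le j0
    have h2 : lstar - 1 ≤ 1 := by linarith
    have h3 : mu j0 * (lstar - 1) ≤ mu j0 * 1 := mul_le_mul_of_nonneg_left h2 h
    linarith
  set αstar : ℝ := (1 - lstar) * mu j0 with hαstardef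
  have hαstar_pos : 0 < αstar := by nlinarith
  have hcond' : mu jstar < αstar := by
    have habs : |mu ⟨0, hd⟩| = -mu j0 := abs_of_neg hmu0_neg
    rw [habs] at hcond
    have : mu jstar < -mu j0 * (lstar - 1) := hcond
    nlinarith
  set α : Fin n → Fin d → ℝ := fun i j => (1 - lam i) * mu j with hαdef
  have hαkey : ∀ i j, α i j ≤ αstar ∧ (lam i ≠ lstar → α i j < αstar) := by
    intro i j
    have hli := hlam_le i
    have hlnn := hlam_nonneg i
    rcases le_or_gt 0 (mu j) with hmuj | hmuj
    · have h1 : α i j ≤ 1 * mu j :=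
        mul_le_mul_of_nonneg_right (by linarith) hmuj
      have h2 : α i j < αstar := by
        have := hmu_le j
        linarith
      exact ⟨le_of_lt h2, fun _ => h2⟩
    · rcases le_or_gt (lam i) 1 with hli1 | hli1
      · have h1 : α i j ≤ 0 :=
          mul_nonpos_of_nonneg_of_nonpos (by linarith) (le_of_lt hmuj)
        exact ⟨by linarith, fun _ => by linarith⟩
      · have h1 : α i j ≤ (1 - lam i) * mu j0 :=
          mul_le_mul_of_nonpos_left (hmu_ge j) (by linarith)
        have h2 : (1 - lam i) * mu j0 ≤ αstar := by
          rw [hαstardef]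
          exact mul_le_mul_of_nonpos_right (by linarith [hlam_le i]) (le_of_lt hmu0_neg)
        refine ⟨le_trans h1 h2, fun hne => ?_⟩
        have h3 : lam i < lstar := lt_of_le_of_ne hli hne
        have h4 : (1 - lam i) * mu j0 < (1 - lstar) * mu j0 :=
          mul_lt_mul_of_neg_right (by linarith) hmu0_neg
        calc α i j ≤ (1 - lam i) * mu j0 := h1
          _ < αstar := by rw [hαstardef]; exact h4
  have hαle : ∀ i j, α i j ≤ αstar := fun i j => (hαkey i j).1
  have hαlt : ∀ i j, lam i ≠ lstar → α i j < αstar := fun i j => (hαkey i j).2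
  have hαstar_at : α istar j0 = αstar := rfl
  -- the a.e. set
  set φ : ((Fin n → Fin d → ℝ) →ₗ[ℝ] ℝ) :=
    { toFun := fun f => (Qᵀ * Matrix.of f * P) istar j0
      map_add' := by
        intro x y
        have : (Matrix.of (x + y) : Matrix (Fin n) (Fin d) ℝ) = Matrix.of x + Matrix.of y := rfl
        simp only [this, Matrix.mul_add, Matrix.add_mul, Matrix.add_apply]
      map_smul' := by
        intro r x
        have : (Matrix.of (r • x) : Matrix (Fin n) (Fin d) ℝ) = r • Matrix.of x := rfl
        simp only [this, Matrix.mul_smul, Matrix.smul_mul, Matrix.smul_apply, RingHom.id_apply,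
          smul_eq_mul] } with hφdef
  have hφne : φ ≠ 0 := by
    intro h
    have h1 : φ (fun i j => (Q * Matrix.single istar j0 (1:ℝ) * Pᵀ) i j) = 0 := by
      rw [h]; rfl
    have h2 : (Matrix.of (fun i j => (Q * Matrix.single istar j0 (1:ℝ) * Pᵀ) i j) :
        Matrix (Fin n) (Fin d) ℝ) = Q * Matrix.single istar j0 (1:ℝ) * Pᵀ := rfl
    have h4 : φ (fun i j => (Q * Matrix.single istar j0 (1:ℝ) * Pᵀ) i j) = (1:ℝ) := by
      show (Qᵀ * Matrix.of (fun i j => (Q * Matrix.single istar j0 (1:ℝ) * Pᵀ) i j) * P)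
        istar j0 = (1:ℝ)
      rw [h2, hsand]
      simp [Matrix.single_apply_same]
    rw [h1] at h4
    exact zero_ne_one h4
  have hae : ∀ᵐ f : Fin n → Fin d → ℝ, φ f ≠ 0 := by
    have hker : volume (LinearMap.ker φ : Set (Fin n → Fin d → ℝ)) = 0 := by
      apply Measure.addHaar_submodule
      intro h
      apply hφne
      refine LinearMap.ext fun x => ?_
      have hx : x ∈ LinearMap.ker φ := h ▸ Submodule.mem_top
      simpa using hx
    filter_upwards [measure_eq_zero_iff_ae_notMem.mp hker] with f hf
    simpa [LinearMap.mem_ker] using hf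
  filter_upwards [hae] with f hcne _ F hF0 hFode
  -- the explicit solution
  set c : Matrix (Fin n) (Fin d) ℝ := Qᵀ * Matrix.of f * P with hcdef
  have hc : c istar j0 ≠ 0 := hcne
  set g : ℝ → Matrix (Fin n) (Fin d) ℝ :=
    fun t => Matrix.of (fun i j => Real.exp (α i j * t) * c i j) with hgdef
  set Fs : ℝ → Matrix (Fin n) (Fin d) ℝ := fun t => Q * g t * Pᵀ with hFsdef
  have hsand2 : ∀ (X : Matrix (Fin n) (Fin d) ℝ), Q * (Qᵀ * X * P) * Pᵀ = X := by
    intro X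
    simp only [← Matrix.mul_assoc, hQ2, Matrix.one_mul]
    rw [Matrix.mul_assoc, hP2, Matrix.mul_one]
  have hFs0 : Fs 0 = Matrix.of f := by
    have h1 : g 0 = c := by
      ext i j
      simp [hgdef]
    show Q * g 0 * Pᵀ = Matrix.of f
    rw [h1, hcdef, hsand2]
  have hAQ : Ahat * Q = Q * Matrix.diagonal (fun i => 1 - lam i) := by
    have hdiag : Matrix.diagonal (fun i : Fin n => 1 - lam i) = 1 - Matrix.diagonal lam := by
      ext i j
      rcases eq_or_ne i j with h | h
      · simp [h, Matrix.diagonal_apply_eq, Matrix.one_apply_eq]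
      · simp [Matrix.diagonal_apply_ne _ h, Matrix.one_apply_ne h, h]
    have h1 : Ahat = 1 - Δ := by rw [hΔ, sub_sub_cancel]
    rw [hdiag, Matrix.mul_sub, Matrix.mul_one, h1, Matrix.sub_mul, Matrix.one_mul, hΔspec]
    congr 1
    rw [Matrix.mul_assoc (Q * Matrix.diagonal lam), hQ1, Matrix.mul_one]
  have hPW : Pᵀ * W = Matrix.diagonal mu * Pᵀ := by
    rw [hWspec, ← Matrix.mul_assoc, ← Matrix.mul_assoc, hP1, Matrix.one_mul]
  have hFsderiv : ∀ t, HasDerivAt Fs (Ahat * Fs t * W) t := fun t =>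
    hfd_aux_ode Ahat Q W P lam mu hAQ hPW c α (fun i j => rfl) t
  have hFeq : ∀ t, 0 ≤ t → F t = Fs t := by
    intro t0 ht0
    let Lv : Matrix (Fin n) (Fin d) ℝ →ₗ[ℝ] Matrix (Fin n) (Fin d) ℝ :=
      { toFun := fun X => Ahat * X * W
        map_add' := fun X Y => by show Ahat * (X + Y) * W = Ahat * X * W + Ahat * Y * W; rw [Matrix.mul_add, Matrix.add_mul]
        map_smul' := fun r X => by
          simp only [RingHom.id_apply]; rw [Matrix.mul_smul, Matrix.smul_mul] }
    let Lc : Matrix (Fin n) (Fin d) ℝ →L[ℝ] Matrix (Fin n) (Fin d) ℝ :=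
      LinearMap.toContinuousLinearMap Lv
    have huniq : Set.EqOn F Fs (Set.Icc 0 t0) := by
      refine ODE_solution_unique_of_mem_Icc_right
        (v := fun _ X => Lc X) (s := fun _ => Set.univ)
        (fun _ _ => Lc.lipschitz.lipschitzOnWith) ?_ ?_ (fun _ _ => trivial) ?_ ?_
        (fun _ _ => trivial) ?_
      · exact fun t ht => ((hFode t ht.1).continuousWithinAt).mono Set.Icc_subset_Ici_self
      · exact fun t ht => (hFode t ht.1).mono (Set.Ici_subset_Ici.mpr ht.1)
      · exact fun t _ => (hFsderiv t).continuousAt.continuousWithinAt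
      · exact fun t _ => (hFsderiv t).hasDerivWithinAt
      · rw [hF0, hFs0]
    exact huniq ⟨ht0, le_refl t0⟩
  -- energy computations
  have hQcan : ∀ (X : Matrix (Fin n) (Fin d) ℝ), Qᵀ * (Q * X) = X := fun X => by
    rw [← Matrix.mul_assoc, hQ1, Matrix.one_mul]
  have htrace : ∀ t, ((Fs t)ᵀ * Δ * Fs t).trace
      = ∑ i, ∑ j, lam i * (Real.exp (α i j * t) * c i j) ^ 2 := by
    intro t
    have key : (Fs t)ᵀ * Δ * Fs t = P * ((g t)ᵀ * (Matrix.diagonal lam * g t)) * Pᵀ := by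
      show (Q * g t * Pᵀ)ᵀ * Δ * (Q * g t * Pᵀ) = _
      rw [hΔspec, Matrix.transpose_mul, Matrix.transpose_mul, Matrix.transpose_transpose]
      simp only [Matrix.mul_assoc]
      rw [hQcan, hQcan]
    rw [key, Matrix.trace_mul_cycle, ← Matrix.mul_assoc, hP1, Matrix.one_mul]
    exact hfd_aux_trace_diag lam (g t)
  have hden : ∀ t, (∑ i, ∑ j, (Fs t i j) ^ 2)
      = ∑ i, ∑ j, (Real.exp (α i j * t) * c i j) ^ 2 := by
    intro t
    have h1 : (∑ i, ∑ j, (Fs t i j) ^ 2) = ((Fs t)ᵀ * Fs t).trace :=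
      (hfd_aux_trace_sq (Fs t)).symm
    have key : (Fs t)ᵀ * Fs t = P * ((g t)ᵀ * g t) * Pᵀ := by
      show (Q * g t * Pᵀ)ᵀ * (Q * g t * Pᵀ) = _
      rw [Matrix.transpose_mul, Matrix.transpose_mul, Matrix.transpose_transpose]
      simp only [Matrix.mul_assoc]
      rw [hQcan]
    rw [h1, key, Matrix.trace_mul_cycle, ← Matrix.mul_assoc, hP1, Matrix.one_mul]
    exact hfd_aux_trace_sq (g t)
  -- rescaled sums
  set Dg : ℝ → ℝ := fun t => ∑ i, ∑ j, (c i j) ^ 2 * Real.exp ((2 * (α i j - αstar)) * t)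
    with hDgdef
  set Ng : ℝ → ℝ := fun t => ∑ i, ∑ j, lam i * ((c i j) ^ 2 * Real.exp ((2 * (α i j - αstar)) * t))
    with hNgdef
  have hterm : ∀ (a cij t : ℝ), (Real.exp (a * t) * cij) ^ 2
      = Real.exp ((2 * αstar) * t) * (cij ^ 2 * Real.exp ((2 * (a - αstar)) * t)) := by
    intro a cij t
    rw [mul_pow, pow_two (Real.exp (a * t)), ← Real.exp_add,
      show a * t + a * t = (2 * αstar) * t + (2 * (a - αstar)) * t by ring, Real.exp_add]
    ring
  have hratio : ∀ t, (∑ i, ∑ j, lam i * (Real.exp (α i j * t) * c i j) ^ 2)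
      / (∑ i, ∑ j, (Real.exp (α i j * t) * c i j) ^ 2) = Ng t / Dg t := by
    intro t
    have hN : (∑ i, ∑ j, lam i * (Real.exp (α i j * t) * c i j) ^ 2)
        = Real.exp ((2 * αstar) * t) * Ng t := by
      show _ = Real.exp ((2 * αstar) * t)
        * ∑ i, ∑ j, lam i * ((c i j) ^ 2 * Real.exp ((2 * (α i j - αstar)) * t))
      simp only [Finset.mul_sum]
      refine Finset.sum_congr rfl fun i _ => Finset.sum_congr rfl fun j _ => ?_
      rw [hterm]
      ring
    have hD : (∑ i, ∑ j, (Real.exp (α i j * t) * c i j) ^ 2)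
        = Real.exp ((2 * αstar) * t) * Dg t := by
      show _ = Real.exp ((2 * αstar) * t)
        * ∑ i, ∑ j, (c i j) ^ 2 * Real.exp ((2 * (α i j - αstar)) * t)
      simp only [Finset.mul_sum]
      refine Finset.sum_congr rfl fun i _ => Finset.sum_congr rfl fun j _ => ?_
      rw [hterm]
    rw [hN, hD, mul_div_mul_left _ _ (Real.exp_ne_zero _)]
  set ℓ : Fin n → Fin d → ℝ := fun i j => if α i j = αstar then (c i j) ^ 2 else 0 with hℓdef
  set Lsum : ℝ := ∑ i, ∑ j, ℓ i j with hLdef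
  have hℓnn : ∀ i j, 0 ≤ ℓ i j := by
    intro i j
    rw [hℓdef]
    dsimp only
    split
    · exact sq_nonneg _
    · exact le_refl 0
  have hLpos : 0 < Lsum := by
    have h1 : ℓ istar j0 = (c istar j0) ^ 2 := by
      rw [hℓdef]
      dsimp only
      rw [if_pos hαstar_at]
    have h0 : 0 < ℓ istar j0 := by
      rw [h1]
      exact lt_of_le_of_ne (sq_nonneg _) (Ne.symm (pow_ne_zero 2 hc))
    have h2 : ℓ istar j0 ≤ ∑ j, ℓ istar j :=
      Finset.single_le_sum (fun j _ => hℓnn istar j) (Finset.mem_univ j0)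
    have h3 : (∑ j, ℓ istar j) ≤ ∑ i, ∑ j, ℓ i j :=
      Finset.single_le_sum (f := fun i => ∑ j, ℓ i j)
        (fun i _ => Finset.sum_nonneg fun j _ => hℓnn i j) (Finset.mem_univ istar)
    rw [hLdef]
    linarith
  have hterm_lim : ∀ i j, Tendsto (fun t => (c i j) ^ 2 * Real.exp ((2 * (α i j - αstar)) * t))
      atTop (nhds (ℓ i j)) := by
    intro i j
    rcases eq_or_ne (α i j) αstar with h | h
    · have hℓ1 : ℓ i j = (c i j) ^ 2 := by rw [hℓdef]; dsimp only; rw [if_pos h]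
      rw [hℓ1]
      have hfun : (fun t => (c i j) ^ 2 * Real.exp ((2 * (α i j - αstar)) * t))
          = fun _ => (c i j) ^ 2 := by
        funext t
        rw [h, sub_self, mul_zero, zero_mul, Real.exp_zero, mul_one]
      rw [hfun]
      exact tendsto_const_nhds
    · have hℓ0 : ℓ i j = 0 := by rw [hℓdef]; dsimp only; rw [if_neg h]
      have hlt : α i j < αstar := lt_of_le_of_ne (hαle i j) h
      have hk : (2 : ℝ) * (α i j - αstar) < 0 := by linarith
      have h1 : Tendsto (fun t : ℝ => (2 * (α i j - αstar)) * t) atTop atBot :=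
        (tendsto_const_mul_atBot_of_neg hk).mpr tendsto_id
      have h2 : Tendsto (fun t => Real.exp ((2 * (α i j - αstar)) * t)) atTop (nhds 0) :=
        Real.tendsto_exp_atBot.comp h1
      have h3 := h2.const_mul ((c i j) ^ 2)
      rw [hℓ0]
      simpa using h3
  have hDg_lim : Tendsto Dg atTop (nhds Lsum) := by
    have : Tendsto (fun t => ∑ i, ∑ j, (c i j) ^ 2 * Real.exp ((2 * (α i j - αstar)) * t))
        atTop (nhds (∑ i, ∑ j, ℓ i j)) :=
      tendsto_finset_sum _ fun i _ => tendsto_finset_sum _ fun j _ => hterm_lim i j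
    exact this
  have hNg_lim : Tendsto Ng atTop (nhds (lstar * Lsum)) := by
    have hsum_eq : ∑ i, ∑ j, lam i * ℓ i j = lstar * Lsum := by
      rw [hLdef, Finset.mul_sum]
      refine Finset.sum_congr rfl fun i _ => ?_
      rw [Finset.mul_sum]
      refine Finset.sum_congr rfl fun j _ => ?_
      rcases eq_or_ne (α i j) αstar with h | h
      · have hli : lam i = lstar := by
          by_contra hne
          exact absurd h (ne_of_lt (hαlt i j hne))
        rw [hli]
      · have hℓ0 : ℓ i j = 0 := by rw [hℓdef]; dsimp only; rw [if_neg h]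
        rw [hℓ0, mul_zero, mul_zero]
    have h1 : Tendsto
        (fun t => ∑ i, ∑ j, lam i * ((c i j) ^ 2 * Real.exp ((2 * (α i j - αstar)) * t)))
        atTop (nhds (∑ i, ∑ j, lam i * ℓ i j)) :=
      tendsto_finset_sum _ fun i _ => tendsto_finset_sum _ fun j _ =>
        (hterm_lim i j).const_mul (lam i)
    rw [← hsum_eq]
    exact h1
  have hlim : Tendsto (fun t => Ng t / Dg t) atTop (nhds lstar) := by
    have := hNg_lim.div hDg_lim (ne_of_gt hLpos)
    rwa [mul_div_assoc, div_self (ne_of_gt hLpos), mul_one] at this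
  constructor
  · -- F t ≠ 0
    intro t ht h0
    have h1 : g t = 0 := by
      have h2 := hsand (g t)
      have h3 : Q * g t * Pᵀ = Fs t := rfl
      rw [h3, ← hFeq t ht, h0] at h2
      simpa using h2.symm
    have h2 := congrFun (congrFun h1 istar) j0
    have h3 : Real.exp (α istar j0 * t) * c istar j0 = 0 := h2
    rcases mul_eq_zero.mp h3 with h | h
    · exact absurd h (Real.exp_ne_zero _)
    · exact hc h
  · refine hlim.congr' ?_
    filter_upwards [eventually_ge_atTop (0:ℝ)] with t ht
    rw [hFeq t ht, htrace t, hden t, hratio t]
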